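/- arXiv:1612.07580 — 2 statements merged into one kernel-verified Lean document; each statement's English description precedes it below -/
import Mathlib

section
/- For all h, a ∈ (0,1], every integer n ≥ 1, and every t > 0, set t_n = 4n·√(a(1+a)). If |t − t_n| ≥ a·t_n, then a^{1/8} h^{1/4} / (n^{1/4} + h^{−1/12} a^{−1/24} |t² − t_n²|^{1/6}) ≤ 2^{1/3} (h/t)^{1/3}. -/
private lemma rpow_nat_helper (x : ℝ) (hx : 0 ≤ x) (p : ℝ) (n m : ℕ) (hp : p * n = m) :
    (x ^ p) ^ n = x ^ m := by
  rw [← Real.rpow_natCast (x ^ p) n, ← Real.rpow_mul hx, hp, Real.rpow_natCast]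

/-- Away from the swallowtail times `t_n = 4n√(a(1+a))`, i.e. when `|t − t_n| ≥ a t_n`,
the swallowtail factor `a^{1/8}h^{1/4}/(n^{1/4} + h^{-1/12}a^{-1/24}|t² − t_n²|^{1/6})`
is bounded by `2^{1/3} (h/t)^{1/3}`. -/
theorem swallowtail_factor_outside_In
    (h a : ℝ) (hh : h ∈ Set.Ioc (0 : ℝ) 1) (ha : a ∈ Set.Ioc (0 : ℝ) 1)
    (n : ℕ) (hn : 1 ≤ n) (t : ℝ) (ht : 0 < t)
    (tn : ℝ) (htn : tn = 4 * n * Real.sqrt (a * (1 + a)))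
    (hfar : a * tn ≤ |t - tn|) :
    a ^ ((1 : ℝ) / 8) * h ^ ((1 : ℝ) / 4) /
        ((n : ℝ) ^ ((1 : ℝ) / 4)
          + h ^ (-(1 : ℝ) / 12) * a ^ (-(1 : ℝ) / 24) * |t ^ 2 - tn ^ 2| ^ ((1 : ℝ) / 6))
      ≤ 2 ^ ((1 : ℝ) / 3) * (h / t) ^ ((1 : ℝ) / 3) := by
  obtain ⟨h0, h1⟩ := hh
  obtain ⟨a0, a1⟩ := ha
  have hnn : (0:ℝ) < n := by exact_mod_cast hn
  have hs : 0 < Real.sqrt (a * (1 + a)) := Real.sqrt_pos.mpr (by nlinarith)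
  have tn0 : 0 < tn := by rw [htn]; positivity
  -- key: a t²/2 ≤ |t² − tn²|
  have hdist : a * t / 2 ≤ |t - tn| := by
    rcases le_or_gt t (2 * tn) with hc | hc
    · calc a * t / 2 ≤ a * tn := by nlinarith
        _ ≤ |t - tn| := hfar
    · have h2 : t / 2 ≤ t - tn := by linarith
      calc a * t / 2 ≤ t / 2 := by nlinarith
        _ ≤ t - tn := h2
        _ ≤ |t - tn| := le_abs_self _
  have hkey : a * t ^ 2 / 2 ≤ |t ^ 2 - tn ^ 2| := by
    have habs : |t ^ 2 - tn ^ 2| = |t - tn| * (t + tn) := by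
      rw [show t ^ 2 - tn ^ 2 = (t - tn) * (t + tn) by ring, abs_mul,
        abs_of_pos (by linarith : (0:ℝ) < t + tn)]
    rw [habs]
    calc a * t ^ 2 / 2 = (a * t / 2) * t := by ring
      _ ≤ |t - tn| * (t + tn) := by
          apply mul_le_mul hdist (by linarith) ht.le (abs_nonneg _)
  -- denominator bound
  set E : ℝ := h ^ (-(1:ℝ) / 12) * a ^ (-(1:ℝ) / 24) * (a * t ^ 2 / 2) ^ ((1:ℝ) / 6) with hEdef
  have hE : 0 < E := by
    apply mul_pos (mul_pos (Real.rpow_pos_of_pos h0 _) (Real.rpow_pos_of_pos a0 _))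
    exact Real.rpow_pos_of_pos (by positivity) _
  have hED : E ≤ (n : ℝ) ^ ((1 : ℝ) / 4)
      + h ^ (-(1 : ℝ) / 12) * a ^ (-(1 : ℝ) / 24) * |t ^ 2 - tn ^ 2| ^ ((1 : ℝ) / 6) := by
    have h6 : (a * t ^ 2 / 2) ^ ((1:ℝ)/6) ≤ |t ^ 2 - tn ^ 2| ^ ((1:ℝ)/6) :=
      Real.rpow_le_rpow (by positivity) hkey (by norm_num)
    have : E ≤ h ^ (-(1 : ℝ) / 12) * a ^ (-(1 : ℝ) / 24) * |t ^ 2 - tn ^ 2| ^ ((1 : ℝ) / 6) := by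
      apply mul_le_mul_of_nonneg_left h6 (by positivity)
    have hn4 : (0:ℝ) ≤ (n : ℝ) ^ ((1 : ℝ) / 4) := by positivity
    linarith
  have step1 : a ^ ((1 : ℝ) / 8) * h ^ ((1 : ℝ) / 4) /
        ((n : ℝ) ^ ((1 : ℝ) / 4)
          + h ^ (-(1 : ℝ) / 12) * a ^ (-(1 : ℝ) / 24) * |t ^ 2 - tn ^ 2| ^ ((1 : ℝ) / 6))
      ≤ a ^ ((1 : ℝ) / 8) * h ^ ((1 : ℝ) / 4) / E := by
    gcongr
  refine step1.trans ?_
  rw [div_le_iff₀ hE]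
  -- compare 24th powers
  have hY : (0:ℝ) ≤ 2 ^ ((1 : ℝ) / 3) * (h / t) ^ ((1 : ℝ) / 3) * E := by positivity
  refine le_of_pow_le_pow_left₀ (n := 24) (by norm_num) hY ?_
  have e1 : (a ^ ((1:ℝ)/8)) ^ (24:ℕ) = a ^ (3:ℕ) :=
    rpow_nat_helper a a0.le _ 24 3 (by norm_num)
  have e2 : (h ^ ((1:ℝ)/4)) ^ (24:ℕ) = h ^ (6:ℕ) :=
    rpow_nat_helper h h0.le _ 24 6 (by norm_num)
  have e3 : ((2:ℝ) ^ ((1:ℝ)/3)) ^ (24:ℕ) = (2:ℝ) ^ (8:ℕ) :=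
    rpow_nat_helper 2 (by norm_num) _ 24 8 (by norm_num)
  have e4 : ((h / t) ^ ((1:ℝ)/3)) ^ (24:ℕ) = (h / t) ^ (8:ℕ) :=
    rpow_nat_helper _ (by positivity) _ 24 8 (by norm_num)
  have e5 : (h ^ (-(1:ℝ)/12)) ^ (24:ℕ) = (h ^ (2:ℕ))⁻¹ := by
    rw [neg_div, Real.rpow_neg h0.le, inv_pow,
      rpow_nat_helper h h0.le _ 24 2 (by norm_num)]
  have e6 : (a ^ (-(1:ℝ)/24)) ^ (24:ℕ) = (a ^ (1:ℕ))⁻¹ := by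
    rw [neg_div, Real.rpow_neg a0.le, inv_pow,
      rpow_nat_helper a a0.le _ 24 1 (by norm_num)]
  have e7 : ((a * t ^ 2 / 2) ^ ((1:ℝ)/6)) ^ (24:ℕ) = (a * t ^ 2 / 2) ^ (4:ℕ) :=
    rpow_nat_helper _ (by positivity) _ 24 4 (by norm_num)
  rw [mul_pow, mul_pow, mul_pow, mul_pow, mul_pow, e1, e2, e3, e4, e5, e6, e7]
  have hrhs : (2:ℝ) ^ (8:ℕ) * (h / t) ^ (8:ℕ) *
      ((h ^ (2:ℕ))⁻¹ * (a ^ (1:ℕ))⁻¹ * (a * t ^ 2 / 2) ^ (4:ℕ)) = 16 * (a ^ 3 * h ^ 6) := by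
    field_simp
    ring
  rw [hrhs]
  nlinarith [pow_pos a0 3, pow_pos h0 6, mul_pos (pow_pos a0 3) (pow_pos h0 6)]
end

section
/- Let u : ℝ → ℂ be a C² function satisfying u''(ω) + ω·u(ω) = 0 for all ω, with u(ω) ≠ 0 for every ω. Then the quantity Im(u'(ω)·conj(u(ω))) is constant in ω; call it W. Moreover, if L : ℝ → ℝ is differentiable and satisfies e^{−iL(ω)} = −conj(u(ω))/u(ω) for all ω, then L'(ω) = 2W/|u(ω)|² for every ω; in particular, if W > 0 then L is strictly increasing on ℝ. -/
open Complex

/-- Wronskian monotonicity: if `u'' + ωu = 0` with `u` nonvanishing, then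
`W = Im(u'(ω) conj(u(ω)))` is constant; and any differentiable `L : ℝ → ℝ` with
`e^{-iL(ω)} = −conj(u(ω))/u(ω)` satisfies `L'(ω) = 2W/|u(ω)|²`, so `L` is strictly
increasing when `W > 0`. -/
theorem wronskian_constant_and_L_strictMono
    (u : ℝ → ℂ) (hu : ContDiff ℝ 2 u)
    (hode : ∀ ω : ℝ, deriv (deriv u) ω + (ω : ℂ) * u ω = 0)
    (hne : ∀ ω : ℝ, u ω ≠ 0) :
    ∃ W : ℝ,
      (∀ ω : ℝ, (deriv u ω * starRingEnd ℂ (u ω)).im = W) ∧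
      ∀ L : ℝ → ℝ, Differentiable ℝ L →
        (∀ ω : ℝ, Complex.exp (-Complex.I * (L ω : ℂ)) = -(starRingEnd ℂ (u ω)) / u ω) →
        (∀ ω : ℝ, deriv L ω = 2 * W / ‖u ω‖ ^ 2) ∧
        (0 < W → StrictMono L) := by
  have hud : Differentiable ℝ u := hu.differentiable (by norm_num)
  have hud2 : Differentiable ℝ (deriv u) := by
    have := (contDiff_succ_iff_deriv (n := 1)).mp (by exact_mod_cast hu)
    exact this.2.2.differentiable one_ne_zero
  -- the wronskian function
  set f : ℝ → ℝ := fun ω => (deriv u ω * starRingEnd ℂ (u ω)).im with hf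
  have hfd : ∀ ω : ℝ, HasDerivAt f
      ((deriv (deriv u) ω * starRingEnd ℂ (u ω)
        + deriv u ω * starRingEnd ℂ (deriv u ω)).im) ω := by
    intro ω
    have h1 : HasDerivAt u (deriv u ω) ω := (hud ω).hasDerivAt
    have h2 : HasDerivAt (deriv u) (deriv (deriv u) ω) ω := (hud2 ω).hasDerivAt
    have hg : HasDerivAt (fun x => deriv u x * starRingEnd ℂ (u x))
        (deriv (deriv u) ω * starRingEnd ℂ (u ω)
          + deriv u ω * starRingEnd ℂ (deriv u ω)) ω := by
      simpa [Pi.mul_def] using h2.mul h1.star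
    exact (Complex.imCLM.hasFDerivAt.comp_hasDerivAt ω hg)
  have hderiv0 : ∀ ω : ℝ, deriv f ω = 0 := by
    intro ω
    rw [(hfd ω).deriv]
    have hdd : deriv (deriv u) ω = -(ω : ℂ) * u ω := by
      have := hode ω; linear_combination this
    rw [hdd]
    have h1 : u ω * starRingEnd ℂ (u ω) = (Complex.normSq (u ω) : ℂ) :=
      Complex.mul_conj _
    have h2 : deriv u ω * starRingEnd ℂ (deriv u ω)
        = (Complex.normSq (deriv u ω) : ℂ) := Complex.mul_conj _
    calc (-(ω:ℂ) * u ω * starRingEnd ℂ (u ω)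
          + deriv u ω * starRingEnd ℂ (deriv u ω)).im
        = (-(ω:ℂ) * (Complex.normSq (u ω) : ℂ)
          + (Complex.normSq (deriv u ω) : ℂ)).im := by rw [mul_assoc, h1, h2]
      _ = 0 := by simp
  refine ⟨f 0, fun ω => ?_, ?_⟩
  · exact is_const_of_deriv_eq_zero (fun x => (hfd x).differentiableAt) hderiv0 ω 0
  intro L hL hexp
  have key : ∀ ω : ℝ, deriv L ω = 2 * f 0 / ‖u ω‖ ^ 2 := by
    intro ω
    have hW : (deriv u ω * starRingEnd ℂ (u ω)).im = f 0 :=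
      is_const_of_deriv_eq_zero (fun x => (hfd x).differentiableAt) hderiv0 ω 0
    set a := u ω with ha
    set d := deriv u ω with hd2
    set dL := deriv L ω with hdL
    have hLd : HasDerivAt L dL ω := (hL ω).hasDerivAt
    have hphase : HasDerivAt (fun x : ℝ => -Complex.I * (L x : ℂ))
        (-Complex.I * (dL : ℂ)) ω := by
      have := (hLd.ofReal_comp).const_mul (-Complex.I)
      simpa using this
    have hF1 : HasDerivAt (fun x => Complex.exp (-Complex.I * (L x : ℂ)) * u x)
        (Complex.exp (-Complex.I * (L ω : ℂ)) * (-Complex.I * (dL : ℂ)) * a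
          + Complex.exp (-Complex.I * (L ω : ℂ)) * d) ω := by
      exact (hphase.cexp).mul ((hud ω).hasDerivAt)
    have hfun : (fun x => Complex.exp (-Complex.I * (L x : ℂ)) * u x)
        = fun x => -(starRingEnd ℂ (u x)) := by
      funext x
      rw [hexp x, div_mul_cancel₀ _ (hne x)]
    rw [hfun] at hF1
    have hF2 : HasDerivAt (fun x => -(starRingEnd ℂ (u x)))
        (-(starRingEnd ℂ d)) ω := by
      simpa [Pi.neg_def] using ((hud ω).hasDerivAt).star.neg
    have hD : Complex.exp (-Complex.I * (L ω : ℂ)) * (-Complex.I * (dL : ℂ)) * a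
          + Complex.exp (-Complex.I * (L ω : ℂ)) * d = -(starRingEnd ℂ d) :=
      hF1.unique hF2
    rw [hexp ω] at hD
    rw [← ha] at hD
    have hane : a ≠ 0 := hne ω
    have hC : Complex.I * (dL : ℂ) * (a * starRingEnd ℂ a)
        = starRingEnd ℂ a * d - a * starRingEnd ℂ d := by
      field_simp [hane] at hD
      linear_combination hD
    have him := congrArg Complex.im hC
    have habs : ‖a‖ ^ 2 = Complex.normSq a := Complex.sq_norm a
    have hpos : 0 < Complex.normSq a := Complex.normSq_pos.mpr (hne ω)
    rw [habs]
    have hWcoord : d.re * (-a.im) + d.im * a.re = f 0 := by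
      simpa [Complex.mul_im] using hW
    simp [Complex.mul_im, Complex.mul_re, Complex.normSq_apply] at him
    rw [eq_div_iff hpos.ne']
    rw [Complex.normSq_apply]
    linarith [him, hWcoord]
  refine ⟨key, fun hWpos => ?_⟩
  apply strictMono_of_deriv_pos
  intro x
  rw [key x]
  have : 0 < ‖u x‖ := by
    simpa using norm_pos_iff.mpr (hne x)
  positivity
end
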